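/- A finite ordering o = (v_1,...,v_n) of the vertices of a graph G is a perfect elimination ordering iff for all i, the set of later neighbors N^+(G,o,i) = { v_j : (v_i,v_j) ∈ E, j > i } induces a clique; if o is a perfect elimination ordering, then the relation pairing each v_i (i < n) with the smallest-index later neighbor v_j (if one exists) defines a forest on V, and defines a tree when G is connected. -/

import Mathlib

open SimpleGraph

/-- The ordering `0 < 1 < ⋯ < n-1` of the vertices of `G : SimpleGraph (Fin n)` is
a perfect elimination ordering: for each `i` the later neighbours
`N⁺(G,o,i) = {j : G.Adj i j, i < j}` induce a clique. -/
def IsPEO {n : ℕ} (G : SimpleGraph (Fin n)) : Prop :=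
  ∀ i j j' : Fin n, i < j → i < j' → j ≠ j' → G.Adj i j → G.Adj i j' → G.Adj j j'

/-- The elimination relation: `i` is paired with its smallest-index later
neighbour `j`. -/
def ElimRel {n : ℕ} (G : SimpleGraph (Fin n)) (i j : Fin n) : Prop :=
  G.Adj i j ∧ i < j ∧ ∀ j' : Fin n, i < j' → j' < j → ¬ G.Adj i j'

section Aux

variable {n : ℕ} {G : SimpleGraph (Fin n)}

lemma elimRel_of_adj {x y : Fin n} (hxy : x < y)
    (ha : (SimpleGraph.fromRel (ElimRel G)).Adj x y) : ElimRel G x y := by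
  rw [SimpleGraph.fromRel_adj] at ha
  rcases ha.2 with h' | h'
  · exact h'
  · exact absurd h'.2.1 (not_lt.mpr hxy.le)

/-- Each vertex has at most one larger neighbour in the elimination graph. -/
lemma elim_unique {x y z : Fin n}
    (hy : (SimpleGraph.fromRel (ElimRel G)).Adj x y)
    (hz : (SimpleGraph.fromRel (ElimRel G)).Adj x z)
    (hxy : x < y) (hxz : x < z) : y = z := by
  have h1 := elimRel_of_adj hxy hy
  have h2 := elimRel_of_adj hxz hz
  by_contra hne
  rcases lt_or_gt_of_ne hne with hlt | hlt
  · exact h2.2.2 y hxy hlt h1.1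
  · exact h1.2.2 z hxz hlt h2.1

lemma no_cycle_at_min {m : Fin n}
    (c : (SimpleGraph.fromRel (ElimRel G)).Walk m m) (hcyc : c.IsCycle)
    (hmin : ∀ x ∈ c.support, m ≤ x) : False := by
  cases c with
  | nil => exact Walk.IsCycle.not_of_nil hcyc
  | cons hadj q =>
    rename_i b
    -- decompose `q.reverse : Walk m b` as `cons`
    obtain ⟨a, hadj2, q2, hq⟩ := Walk.exists_eq_cons_of_ne hadj.ne q.reverse
    -- `a` and `b` are in the support
    have hbsup : b ∈ (Walk.cons hadj q).support := by
      simp [Walk.support_cons, Walk.start_mem_support]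
    have hasup : a ∈ (Walk.cons hadj q).support := by
      have : a ∈ q.reverse.support := by
        rw [hq]; simp [Walk.support_cons, Walk.start_mem_support]
      rw [Walk.support_reverse, List.mem_reverse] at this
      simp [Walk.support_cons, this]
    have hmb : m < b := lt_of_le_of_ne (hmin b hbsup) hadj.ne
    have hma : m < a := lt_of_le_of_ne (hmin a hasup) hadj2.ne
    have hab : a ≠ b := by
      intro hab
      subst hab
      have hnd := hcyc.isCircuit.isTrail.edges_nodup
      rw [Walk.edges_cons] at hnd
      have hmem : s(m, a) ∈ q.edges := by
        have : s(m, a) ∈ q.reverse.edges := by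
          rw [hq]; simp [Walk.edges_cons]
        rwa [Walk.edges_reverse, List.mem_reverse] at this
      exact (List.nodup_cons.mp hnd).1 hmem
    exact hab (elim_unique hadj2 hadj hma hmb)

lemma elim_acyclic : (SimpleGraph.fromRel (ElimRel G)).IsAcyclic := by
  intro v c hc
  have hvne : v ∈ c.support := c.start_mem_support
  have hne : c.support.toFinset.Nonempty := ⟨v, by simp [hvne]⟩
  set m := c.support.toFinset.min' hne with hmdef
  have hm : m ∈ c.support := by
    have := c.support.toFinset.min'_mem hne
    simpa using this
  have hmin : ∀ x ∈ c.support, m ≤ x := fun x hx =>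
    Finset.min'_le _ _ (by simpa using hx)
  refine no_cycle_at_min (c.rotate m hm) (hc.rotate hm) ?_
  intro x hx
  rw [Walk.support_eq_cons] at hx
  rcases List.mem_cons.mp hx with h' | hx'
  · exact h'.symm.le
  · have hrot := Walk.support_rotate c m hm
    have : x ∈ c.support.tail := hrot.mem_iff.mp hx'
    exact hmin x (List.mem_of_mem_tail this)

/-- In a connected graph with a PEO, every vertex that is not the largest
has a later neighbour.  Here stated for any walk to a larger vertex. -/
lemma exists_later_neighbor (h : IsPEO G) :
    ∀ L (u v : Fin n) (p : G.Walk u v), p.length ≤ L → u < v →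
      ∃ j, u < j ∧ G.Adj u j := by
  intro L
  induction L using Nat.strong_induction_on with
  | _ L IH =>
    intro u v p hpL huv
    by_cases hall : ∀ x ∈ p.support, u ≤ x
    · cases p with
      | nil => exact absurd rfl huv.ne
      | cons hadj q =>
        rename_i b
        have hb : u ≤ b := hall b (by simp [Walk.support_cons, Walk.start_mem_support])
        exact ⟨b, lt_of_le_of_ne hb hadj.ne, hadj⟩
    · push_neg at hall
      obtain ⟨x0, hx0s, hx0'⟩ := hall
      set F := p.support.toFinset.filter (· < u) with hF
      have hFne : F.Nonempty := ⟨x0, by simp [hF, hx0', hx0s]⟩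
      set m := F.min' hFne with hmdef
      have hmF : m ∈ F := F.min'_mem hFne
      have hmsup : m ∈ p.support := by
        have := (Finset.mem_filter.mp hmF).1; simpa using this
      have hmu : m < u := (Finset.mem_filter.mp hmF).2
      have hminpr : ∀ x ∈ p.support, x < u → m ≤ x := fun x hx hxu =>
        F.min'_le x (by simp [hF, hx, hxu])
      have hmgt : ∀ x ∈ p.support, x ≠ m → G.Adj m x → m < x := by
        intro x hx hxm _
        by_cases hxu : x < u
        · exact lt_of_le_of_ne (hminpr x hx hxu) (Ne.symm hxm)
        · exact lt_of_lt_of_le hmu (not_lt.mp hxu)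
      set t := p.takeUntil m hmsup with ht
      set d := p.dropUntil m hmsup with hd
      have hspec : t.append d = p := p.take_spec hmsup
      have hlen : t.length + d.length = p.length := by
        rw [← hspec, Walk.length_append]
      have hmv : m ≠ v := ne_of_lt (lt_trans hmu huv)
      have hmune : m ≠ u := ne_of_lt hmu
      -- decompose d : Walk m v
      obtain ⟨b, hdb, d', hdeq⟩ := Walk.exists_eq_cons_of_ne hmv d
      -- decompose t.reverse : Walk m u
      obtain ⟨a, hta, t', hteq⟩ := Walk.exists_eq_cons_of_ne hmune t.reverse
      have hbs : b ∈ p.support := by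
        refine p.support_dropUntil_subset hmsup ?_
        rw [← hd, hdeq]; simp [Walk.support_cons, Walk.start_mem_support]
      have has : a ∈ p.support := by
        refine p.support_takeUntil_subset hmsup ?_
        have : a ∈ t.reverse.support := by
          rw [hteq]; simp [Walk.support_cons, Walk.start_mem_support]
        rwa [Walk.support_reverse, List.mem_reverse] at this
      have hmb : m < b := hmgt b hbs hdb.ne' hdb
      have hma : m < a := hmgt a has hta.ne' hta
      have htlen : t.length = t'.length + 1 := by
        have := congrArg Walk.length hteq
        rwa [Walk.length_reverse, Walk.length_cons] at this
      have hdlen : d.length = d'.length + 1 := by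
        have := congrArg Walk.length hdeq
        rwa [Walk.length_cons] at this
      by_cases hab : a = b
      · subst hab
        have hwlen : (t'.reverse.append d').length = t'.length + d'.length := by
          rw [Walk.length_append, Walk.length_reverse]
        exact IH (t'.reverse.append d').length (by omega) u v _ le_rfl huv
      · have hadjab : G.Adj a b := h m a b hma hmb hab hta hdb
        have hwlen : (t'.reverse.append (Walk.cons hadjab d')).length
            = t'.length + d'.length + 1 := by
          rw [Walk.length_append, Walk.length_reverse, Walk.length_cons]; omega
        exact IH (t'.reverse.append (Walk.cons hadjab d')).length (by omega) u v _ le_rfl huv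

lemma elim_connected (h : IsPEO G) (hG : G.Connected) :
    (SimpleGraph.fromRel (ElimRel G)).Connected := by
  classical
  have hne : Nonempty (Fin n) := hG.nonempty
  obtain ⟨m0, rfl⟩ : ∃ m0, n = m0 + 1 := by
    rcases n with _ | m0
    · exact (hne.elim fun x => x.elim0)
    · exact ⟨m0, rfl⟩
  have key : ∀ k (x : Fin (m0 + 1)), m0 - x.val ≤ k →
      (SimpleGraph.fromRel (ElimRel G)).Reachable x (Fin.last m0) := by
    intro k
    induction k with
    | zero =>
      intro x hx
      have : x = Fin.last m0 := by
        have hxle : x.val ≤ m0 := Nat.lt_succ_iff.mp x.isLt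
        have : x.val = m0 := by omega
        exact Fin.ext this
      rw [this]
    | succ k IH =>
      intro x hx
      by_cases hxt : x = Fin.last m0
      · rw [hxt]
      · have hxlt : x < Fin.last m0 :=
          lt_of_le_of_ne (Fin.le_last x) hxt
        obtain ⟨p⟩ := hG.preconnected x (Fin.last m0)
        obtain ⟨j, hj, hadj⟩ := exists_later_neighbor h p.length x _ p le_rfl hxlt
        -- the minimal later neighbour
        set J := Finset.univ.filter (fun j' : Fin (m0 + 1) => x < j' ∧ G.Adj x j') with hJ
        have hJne : J.Nonempty := ⟨j, by simp [hJ, hj, hadj]⟩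
        set j0 := J.min' hJne with hj0def
        have hj0J : j0 ∈ J := J.min'_mem hJne
        have hj0lt : x < j0 := (Finset.mem_filter.mp hj0J).2.1
        have hj0adj : G.Adj x j0 := (Finset.mem_filter.mp hj0J).2.2
        have helim : ElimRel G x j0 := by
          refine ⟨hj0adj, hj0lt, ?_⟩
          intro j' hj'1 hj'2 hadj'
          have : j0 ≤ j' := J.min'_le j' (by simp [hJ, hj'1, hadj'])
          exact absurd hj'2 (not_lt.mpr this)
        have hHadj : (SimpleGraph.fromRel (ElimRel G)).Adj x j0 := by
          rw [SimpleGraph.fromRel_adj]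
          exact ⟨ne_of_lt hj0lt, Or.inl helim⟩
        have hrest : (SimpleGraph.fromRel (ElimRel G)).Reachable j0 (Fin.last m0) := by
          refine IH j0 ?_
          have : x.val < j0.val := hj0lt
          omega
        exact (hHadj.reachable).trans hrest
  refine ⟨fun x y => ?_⟩
  exact (key _ x le_rfl).trans (key _ y le_rfl).symm

end Aux

/-- if the ordering is a perfect elimination ordering, then the graph
pairing each vertex with its smallest-index later neighbour is a forest, and is a
tree when `G` is connected (the elimination tree). -/
theorem elimRel_forest_of_isPEO {n : ℕ} (G : SimpleGraph (Fin n)) (h : IsPEO G) :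
    (SimpleGraph.fromRel (ElimRel G)).IsAcyclic ∧
      (G.Connected → (SimpleGraph.fromRel (ElimRel G)).IsTree) := by
  exact ⟨elim_acyclic, fun hG => ⟨elim_connected h hG, elim_acyclic⟩⟩
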